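/- The set of poles of the meromorphic function s ↦ 3^{-s}/(1 - 2·3^{-s}) on ℂ is exactly {log_3 2 + 2πim/log 3 : m ∈ ℤ}, and each pole is simple. -/

import Mathlib

open Complex Filter

lemma logC3 : Complex.log 3 = ((Real.log 3 : ℝ) : ℂ) := by
  rw [show (3:ℂ) = ((3:ℝ):ℂ) by norm_num, Complex.ofReal_log (by norm_num)]

lemma log3_ne : (Complex.log 3 : ℂ) ≠ 0 := by
  rw [logC3]; exact_mod_cast (Real.log_pos (by norm_num)).ne'

lemma cpow3 (z : ℂ) : (3:ℂ) ^ (-z) = Complex.exp (Complex.log 3 * (-z)) :=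
  Complex.cpow_def_of_ne_zero (by norm_num) _


lemma pole_val {ω : ℂ} (m : ℤ)
    (hω : ω = Real.log 2 / Real.log 3 + 2 * Real.pi * Complex.I * m / Real.log 3) :
    (3:ℂ) ^ (-ω) = 1/2 := by
  rw [cpow3]
  have h : Complex.log 3 * (-ω) = -(Real.log 2 : ℂ) + (-m : ℤ) * (2 * Real.pi * Complex.I) := by
    rw [hω, logC3]
    field_simp [log3_ne]
    push_cast; ring
  rw [h, Complex.exp_add, Complex.exp_int_mul_two_pi_mul_I, mul_one,
    ← Complex.ofReal_neg, ← Complex.ofReal_exp, Real.exp_neg, Real.exp_log (by norm_num)]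
  norm_num

-- converse: if 3^{-s} = 1/2 then s is in the set
lemma pole_mem {s : ℂ} (h : (3:ℂ) ^ (-s) = 1/2) :
    ∃ m : ℤ, s = Real.log 2 / Real.log 3 + 2 * Real.pi * Complex.I * m / Real.log 3 := by
  rw [cpow3] at h
  have h2 : Complex.exp (Complex.log 3 * (-s) + (Real.log 2 : ℂ)) = 1 := by
    rw [Complex.exp_add, h, ← Complex.ofReal_exp, Real.exp_log (by norm_num)]
    norm_num
  obtain ⟨n, hn⟩ := Complex.exp_eq_one_iff.mp h2
  refine ⟨-n, ?_⟩
  have hne : ((Real.log 3 : ℝ) : ℂ) ≠ 0 := logC3 ▸ log3_ne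
  rw [logC3] at hn
  have key : s = ((Real.log 2 : ℂ) + 2 * Real.pi * Complex.I * ((-n : ℤ) : ℂ)) / ((Real.log 3 : ℝ) : ℂ) := by
    rw [eq_div_iff hne]
    push_cast
    linear_combination -hn
  rw [key]
  ring

-- analyticity of z ↦ 3^{-z}
lemma analytic3 (s : ℂ) : AnalyticAt ℂ (fun z : ℂ => (3:ℂ) ^ (-z)) s := by
  have : (fun z : ℂ => (3:ℂ) ^ (-z)) = fun z => Complex.exp (Complex.log 3 * (-z)) := by
    funext z; exact cpow3 z
  rw [this]
  exact (analyticAt_const.mul (analyticAt_id.neg)).cexp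

lemma hasDeriv_g (ω : ℂ) (hω : (3:ℂ) ^ (-ω) = 1/2) :
    HasDerivAt (fun z : ℂ => 1 - 2 * (3:ℂ) ^ (-z)) (Complex.log 3) ω := by
  have h1 : HasDerivAt (fun z : ℂ => Complex.log 3 * (-z)) (-Complex.log 3) ω := by
    simpa using ((hasDerivAt_id ω).neg.const_mul (Complex.log 3))
  have h2 := h1.cexp
  have h3 := (h2.const_mul (2:ℂ)).const_sub 1
  have : (fun z : ℂ => 1 - 2 * Complex.exp (Complex.log 3 * (-z)))
      = fun z : ℂ => 1 - 2 * (3:ℂ) ^ (-z) := by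
    funext z; rw [cpow3]
  rw [this] at h3
  refine h3.congr_deriv ?_
  rw [← cpow3, hω]
  ring

lemma pole_tendsto (ω : ℂ) (hω : (3:ℂ) ^ (-ω) = 1/2) :
    Tendsto (fun z : ℂ => (z - ω) * ((3 : ℂ) ^ (-z) / (1 - 2 * (3 : ℂ) ^ (-z))))
      (nhdsWithin ω {ω}ᶜ) (nhds ((1/2) / Complex.log 3)) := by
  set g : ℂ → ℂ := fun z => 1 - 2 * (3:ℂ) ^ (-z) with hgdef
  have hg : HasDerivAt g (Complex.log 3) ω := hasDeriv_g ω hω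
  have hgω : g ω = 0 := by simp [hgdef, hω]
  have hslope : Tendsto (slope g ω) (nhdsWithin ω {ω}ᶜ) (nhds (Complex.log 3)) :=
    hasDerivAt_iff_tendsto_slope.mp hg
  have hnum : Tendsto (fun z : ℂ => (3:ℂ) ^ (-z)) (nhdsWithin ω {ω}ᶜ) (nhds (1/2)) := by
    have := (analytic3 ω).continuousAt.tendsto
    rw [hω] at this
    exact this.mono_left nhdsWithin_le_nhds
  have hdiv := hnum.div hslope log3_ne
  refine hdiv.congr' ?_
  filter_upwards [self_mem_nhdsWithin] with z hz
  have hzω : z - ω ≠ 0 := sub_ne_zero.mpr hz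
  show (3:ℂ) ^ (-z) / slope g ω z = (z - ω) * ((3:ℂ) ^ (-z) / g z)
  rw [slope_def_field, hgω, sub_zero, div_div_eq_mul_div, mul_comm ((3:ℂ) ^ (-z)) (z - ω),
    mul_div_assoc]

/-- The set of poles of `s ↦ 3^{-s}/(1 - 2·3^{-s})` is exactly
`{log₃ 2 + 2πim/log 3 : m ∈ ℤ}`, and each pole is simple. -/
theorem cantor_string_complex_dimensions :
    ({s : ℂ | ¬ AnalyticAt ℂ (fun z : ℂ => (3 : ℂ) ^ (-z) / (1 - 2 * (3 : ℂ) ^ (-z))) s}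
      = {s : ℂ | ∃ m : ℤ, s = Real.log 2 / Real.log 3
          + 2 * Real.pi * Complex.I * m / Real.log 3}) ∧
    ∀ ω : ℂ, (∃ m : ℤ, ω = Real.log 2 / Real.log 3
        + 2 * Real.pi * Complex.I * m / Real.log 3) →
      ∃ c : ℂ, c ≠ 0 ∧
        Tendsto (fun z : ℂ => (z - ω) * ((3 : ℂ) ^ (-z) / (1 - 2 * (3 : ℂ) ^ (-z))))
          (nhdsWithin ω {ω}ᶜ) (nhds c) := by
  have key : ∀ ω : ℂ, (∃ m : ℤ, ω = Real.log 2 / Real.log 3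
        + 2 * Real.pi * Complex.I * m / Real.log 3) →
      ¬ AnalyticAt ℂ (fun z : ℂ => (3 : ℂ) ^ (-z) / (1 - 2 * (3 : ℂ) ^ (-z))) ω := by
    intro ω ⟨m, hm⟩ hA
    have hω := pole_val m hm
    have ht := pole_tendsto ω hω
    have ht0 : Tendsto (fun z : ℂ => (z - ω) * ((3 : ℂ) ^ (-z) / (1 - 2 * (3 : ℂ) ^ (-z))))
        (nhdsWithin ω {ω}ᶜ) (nhds 0) := by
      have h1 : Tendsto (fun z : ℂ => (z - ω) * ((3 : ℂ) ^ (-z) / (1 - 2 * (3 : ℂ) ^ (-z))))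
          (nhds ω) (nhds (0 * ((3 : ℂ) ^ (-ω) / (1 - 2 * (3 : ℂ) ^ (-ω))))) := by
        have := (Filter.Tendsto.sub_const tendsto_id ω).mul hA.continuousAt.tendsto
        simpa using this
      simpa using h1.mono_left nhdsWithin_le_nhds
    have : (1/2 : ℂ) / Complex.log 3 = 0 := tendsto_nhds_unique ht ht0
    exact div_ne_zero (by norm_num) log3_ne this
  constructor
  · ext s
    simp only [Set.mem_setOf_eq]
    constructor
    · intro hna
      by_contra hs
      apply hna
      have hne : 1 - 2 * (3:ℂ) ^ (-s) ≠ 0 := by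
        intro h0
        exact hs (pole_mem (by linear_combination -h0/2))
      exact (analytic3 s).div (analyticAt_const.sub (analyticAt_const.mul (analytic3 s))) hne
    · exact key s
  · intro ω ⟨m, hm⟩
    exact ⟨(1/2 : ℂ) / Complex.log 3, div_ne_zero (by norm_num) log3_ne,
      pole_tendsto ω (pole_val m hm)⟩
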